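/- For two symmetric real n×n matrices A and B, the square of the Frobenius norm of the commutator satisfies N(AB − BA) ≤ 2·N(A)·N(B). -/

import Mathlib

open Matrix

noncomputable def frobN {n : ℕ} (A : Matrix (Fin n) (Fin n) ℝ) : ℝ := (Aᵀ * A).trace

lemma frobN_eq_sum {n : ℕ} (M : Matrix (Fin n) (Fin n) ℝ) :
    frobN M = ∑ i, ∑ j, (M j i)^2 := by
  simp [frobN, trace, Matrix.mul_apply, diag, sq]

lemma frobN_conj {n : ℕ} (U M : Matrix (Fin n) (Fin n) ℝ)
    (hU : Uᵀ * U = 1) :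
    frobN (U * M * Uᵀ) = frobN M := by
  have h2 : ∀ X : Matrix (Fin n) (Fin n) ℝ, Uᵀ * (U * X) = X := fun X => by
    rw [← mul_assoc, hU, one_mul]
  have : (U * M * Uᵀ)ᵀ * (U * M * Uᵀ) = U * (Mᵀ * (M * Uᵀ)) := by
    simp only [transpose_mul, transpose_transpose, mul_assoc, h2]
  rw [frobN, this, trace_mul_comm, mul_assoc, mul_assoc, hU, mul_one, frobN]

lemma frobN_nonneg_term {n : ℕ} (d : Fin n → ℝ) :
    frobN (diagonal d) = ∑ k, (d k)^2 := by
  rw [frobN_eq_sum]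
  simp [diagonal_apply, Finset.sum_ite_eq, sq]

lemma key {n : ℕ} (d : Fin n → ℝ) (M : Matrix (Fin n) (Fin n) ℝ) :
    frobN (diagonal d * M - M * diagonal d) ≤ 2 * frobN (diagonal d) * frobN M := by
  rw [frobN_eq_sum (diagonal d * M - M * diagonal d), frobN_eq_sum M, frobN_nonneg_term]
  set F := ∑ k, (d k)^2 with hF
  rw [Finset.mul_sum]
  apply Finset.sum_le_sum
  intro i _
  rw [Finset.mul_sum]
  apply Finset.sum_le_sum
  intro j _
  have hentry : (diagonal d * M - M * diagonal d) j i = (d j - d i) * M j i := by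
    simp [Matrix.sub_apply, diagonal_mul, mul_diagonal]
    ring
  rw [hentry, mul_pow]
  have h1 : (d j - d i)^2 ≤ 2 * F := by
    rcases eq_or_ne j i with h | h
    · simp only [h, sub_self]
      have : (0:ℝ) ≤ F := Finset.sum_nonneg fun k _ => sq_nonneg (d k)
      nlinarith
    · have : (d j)^2 + (d i)^2 ≤ ∑ k, (d k)^2 := by
        have := Finset.sum_le_sum_of_subset_of_nonneg
          (Finset.insert_subset_iff.mpr ⟨Finset.mem_univ j, Finset.singleton_subset_iff.mpr (Finset.mem_univ i)⟩)
          (fun k _ _ => sq_nonneg (d k))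
        rwa [Finset.sum_insert (by simpa using h), Finset.sum_singleton] at this
      nlinarith [sq_nonneg (d j + d i)]
  have h2 : (0:ℝ) ≤ (M j i)^2 := sq_nonneg _
  nlinarith

theorem comm_norm_le {n : ℕ} (A B : Matrix (Fin n) (Fin n) ℝ)
    (hA : A.IsSymm) (hB : B.IsSymm) :
    frobN (A * B - B * A) ≤ 2 * frobN A * frobN B := by
  have hA' : A.IsHermitian := by
    have : Aᴴ = Aᵀ := Matrix.conjTranspose_eq_transpose_of_trivial A
    rw [Matrix.IsHermitian, this]; exact hA
  set U : Matrix (Fin n) (Fin n) ℝ := (hA'.eigenvectorUnitary : Matrix (Fin n) (Fin n) ℝ) with hUdef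
  have hstar : star U = Uᵀ := rfl
  have hU1 : Uᵀ * U = 1 := by
    rw [← hstar]; exact (Matrix.mem_unitaryGroup_iff').mp hA'.eigenvectorUnitary.2
  have hU2 : U * Uᵀ = 1 := by
    rw [← hstar]; exact (Matrix.mem_unitaryGroup_iff).mp hA'.eigenvectorUnitary.2
  set d := hA'.eigenvalues with hd
  have hspec : A = U * diagonal d * Uᵀ := by
    have := hA'.spectral_theorem
    rw [Unitary.conjStarAlgAut_apply] at this
    rw [← hstar]
    exact this
  set B' := Uᵀ * B * U with hB'
  have hcomm : A * B - B * A = U * (diagonal d * B' - B' * diagonal d) * Uᵀ := by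
    rw [hspec, hB']
    have h2 : ∀ X : Matrix (Fin n) (Fin n) ℝ, Uᵀ * (U * X) = X := fun X => by
      rw [← mul_assoc, hU1, one_mul]
    have h3 : ∀ X : Matrix (Fin n) (Fin n) ℝ, X * (U * Uᵀ) = X := fun X => by
      rw [hU2, mul_one]
    have h4 : ∀ X : Matrix (Fin n) (Fin n) ℝ, U * (Uᵀ * X) = X := fun X => by
      rw [← mul_assoc, hU2, one_mul]
    simp only [Matrix.mul_sub, Matrix.sub_mul, mul_assoc, h2, h3, h4]
  have hfA : frobN A = frobN (diagonal d) := by rw [hspec, frobN_conj _ _ hU1]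
  have hfB : frobN B' = frobN B := by
    have : B' = Uᵀ * B * Uᵀᵀ := by rw [transpose_transpose]
    rw [this, frobN_conj Uᵀ B (by rwa [transpose_transpose])]
  calc frobN (A * B - B * A) = frobN (diagonal d * B' - B' * diagonal d) := by
        rw [hcomm, frobN_conj _ _ hU1]
    _ ≤ 2 * frobN (diagonal d) * frobN B' := key d B'
    _ = 2 * frobN A * frobN B := by rw [hfA, hfB]
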